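/- Let ε > 0 and let M₁ = diag(1, −√ε, −√ε, 0, 0, 0, 0), M₂ = diag(0, 1, 0, √ε, √ε, 0, 0), M₃ = diag(0, 0, 1, 0, 0, √ε, √ε) be 7×7 real diagonal matrices, and set X = M₁ + √ε·M₂ + √ε·M₃ = diag(1, 0, 0, ε, ε, ε, ε). Then rank(X) = 5, rank(M_i) = 3 for i = 1, 2, 3, ‖X‖_*/‖X‖_F = (1 + 4ε)/√(1 + 4ε²), ‖M_i‖_*/‖M_i‖_F = (1 + 2√ε)/√(1 + 2ε) for each i, and for all sufficiently small ε > 0 one has ‖X‖_*/‖X‖_F < ‖M_i‖_*/‖M_i‖_F. Hence the minimizer of the normalized nuclear norm over span{M₁, M₂, M₃} is not attained at a matrix of minimal rank. -/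

import Mathlib

/-- Frobenius norm of a real matrix. -/
noncomputable def frobNorm {m n : ℕ} (X : Matrix (Fin m) (Fin n) ℝ) : ℝ :=
  Real.sqrt (∑ i, ∑ j, (X i j) ^ 2)

/-- Nuclear norm of a real matrix: the sum of its singular values, i.e. of the
square roots of the eigenvalues of `Xᵀ * X`. -/
noncomputable def nuclearNorm {m n : ℕ} (X : Matrix (Fin m) (Fin n) ℝ) : ℝ :=
  ∑ i, Real.sqrt ((show (X.transpose * X).IsHermitian by
    simpa [Matrix.conjTranspose_eq_transpose_of_trivial] using
      Matrix.isHermitian_conjTranspose_mul_self X).eigenvalues i)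

/-- The three 7×7 diagonal matrices from the counterexample. -/
noncomputable def Mex1 (ε : ℝ) : Matrix (Fin 7) (Fin 7) ℝ :=
  Matrix.diagonal ![1, -Real.sqrt ε, -Real.sqrt ε, 0, 0, 0, 0]

noncomputable def Mex2 (ε : ℝ) : Matrix (Fin 7) (Fin 7) ℝ :=
  Matrix.diagonal ![0, 1, 0, Real.sqrt ε, Real.sqrt ε, 0, 0]

noncomputable def Mex3 (ε : ℝ) : Matrix (Fin 7) (Fin 7) ℝ :=
  Matrix.diagonal ![0, 0, 1, 0, 0, Real.sqrt ε, Real.sqrt ε]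

/-- The combination `X = M₁ + √ε·M₂ + √ε·M₃`. -/
noncomputable def Xex (ε : ℝ) : Matrix (Fin 7) (Fin 7) ℝ :=
  Mex1 ε + Real.sqrt ε • Mex2 ε + Real.sqrt ε • Mex3 ε

open Polynomial Matrix Finset

lemma charpoly_diagonal' {n : Type*} [Fintype n] [DecidableEq n] {R : Type*} [CommRing R]
    (d : n → R) : (Matrix.diagonal d).charpoly = ∏ i, (X - C (d i)) := by
  rw [Matrix.charpoly, charmatrix]
  have : (C : R →+* R[X]).mapMatrix (diagonal d) = diagonal (fun i => C (d i)) := by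
    simp [RingHom.mapMatrix_apply, Matrix.diagonal_map]
  rw [this, Matrix.scalar_apply, Matrix.diagonal_sub, Matrix.det_diagonal]

lemma charpoly_conj' {n : Type*} [Fintype n] [DecidableEq n]
    (U D V : Matrix n n ℝ) (h1 : U * V = 1) (h2 : V * U = 1) :
    (U * D * V).charpoly = D.charpoly := by
  let f : Matrix n n ℝ →+* Matrix n n ℝ[X] := RingHom.mapMatrix (C : ℝ →+* ℝ[X])
  have hf1 : f U * f V = 1 := by rw [← _root_.map_mul, h1, _root_.map_one]
  have hf2 : f V * f U = 1 := by rw [← _root_.map_mul, h2, _root_.map_one]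
  have key : charmatrix (U * D * V) = f U * charmatrix D * f V := by
    rw [charmatrix, charmatrix, _root_.map_mul, _root_.map_mul, mul_sub, sub_mul]
    congr 1
    have hc : Matrix.scalar n (X : ℝ[X]) * f V = f V * Matrix.scalar n (X : ℝ[X]) :=
      (Matrix.scalar_commute (X : ℝ[X]) (fun r => Commute.all _ _) (f V))
    rw [mul_assoc, hc, ← mul_assoc, hf1, one_mul]
  rw [Matrix.charpoly, Matrix.charpoly, key, Matrix.det_mul, Matrix.det_mul]
  have : (f U).det * (f V).det = 1 := by
    rw [← Matrix.det_mul, hf1, Matrix.det_one]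
  calc (f U).det * (charmatrix D).det * (f V).det
      = (charmatrix D).det * ((f U).det * (f V).det) := by ring
    _ = (charmatrix D).det := by rw [this, mul_one]

lemma eigenvalues_multiset_diagonal' {n : Type*} [Fintype n] [DecidableEq n]
    {A : Matrix n n ℝ} (hA : A.IsHermitian) (d : n → ℝ) (hAd : A = Matrix.diagonal d) :
    (Finset.univ.val.map hA.eigenvalues) = Finset.univ.val.map d := by
  have hU := (Matrix.mem_unitaryGroup_iff).mp (hA.eigenvectorUnitary).2
  have hU' := (Matrix.mem_unitaryGroup_iff').mp (hA.eigenvectorUnitary).2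
  have hsp := hA.spectral_theorem
  have hch : A.charpoly = (Matrix.diagonal hA.eigenvalues).charpoly := by
    calc A.charpoly
        = ((hA.eigenvectorUnitary : Matrix n n ℝ) * Matrix.diagonal hA.eigenvalues *
            star (hA.eigenvectorUnitary : Matrix n n ℝ)).charpoly := by
          have hdiag : Matrix.diagonal ((RCLike.ofReal : ℝ → ℝ) ∘ hA.eigenvalues)
              = Matrix.diagonal hA.eigenvalues := by
            rfl
          rw [← hdiag]; exact congrArg Matrix.charpoly hsp
      _ = _ := charpoly_conj' _ _ _ hU hU'
  have h1 : A.charpoly = ∏ i, (X - C (hA.eigenvalues i)) := by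
    rw [hch, charpoly_diagonal']
  have h2 : A.charpoly = ∏ i, (X - C (d i)) := by rw [hAd, charpoly_diagonal']
  have hroots : ∀ (w : n → ℝ), (∏ i, (X - C (w i))).roots = Finset.univ.val.map w := by
    intro w
    have : (∏ i, (X - C (w i))) = ((Finset.univ.val.map w).map fun a => X - C a).prod := by
      rw [Multiset.map_map]; rfl
    rw [this, Polynomial.roots_multiset_prod_X_sub_C]
  have := congrArg Polynomial.roots (h1.symm.trans h2)
  rwa [hroots, hroots] at this

lemma sum_sqrt_eigenvalues' {n : Type*} [Fintype n] [DecidableEq n]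
    {A : Matrix n n ℝ} (hA : A.IsHermitian) (d : n → ℝ) (hAd : A = Matrix.diagonal d) :
    ∑ i, Real.sqrt (hA.eigenvalues i) = ∑ i, Real.sqrt (d i) := by
  have h := eigenvalues_multiset_diagonal' hA d hAd
  rw [Finset.sum_eq_multiset_sum, Finset.sum_eq_multiset_sum]
  calc (Finset.univ.val.map fun i => Real.sqrt (hA.eigenvalues i)).sum
      = ((Finset.univ.val.map hA.eigenvalues).map Real.sqrt).sum := by
        rw [Multiset.map_map]; rfl
    _ = ((Finset.univ.val.map d).map Real.sqrt).sum := by rw [h]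
    _ = _ := by rw [Multiset.map_map]; rfl

lemma nuclearNorm_diagonal' {k : ℕ} (w : Fin k → ℝ) :
    nuclearNorm (Matrix.diagonal w) = ∑ i, |w i| := by
  rw [nuclearNorm]
  have hd : (Matrix.diagonal w)ᵀ * Matrix.diagonal w
      = Matrix.diagonal (fun i => w i ^ 2) := by
    rw [Matrix.diagonal_transpose, Matrix.diagonal_mul_diagonal]
    congr 1; ext i; ring
  rw [sum_sqrt_eigenvalues' _ _ hd]
  exact Finset.sum_congr rfl fun i _ => Real.sqrt_sq_eq_abs _

lemma frobNorm_diagonal' {k : ℕ} (w : Fin k → ℝ) :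
    frobNorm (Matrix.diagonal w) = Real.sqrt (∑ i, (w i) ^ 2) := by
  rw [frobNorm]
  congr 1
  refine Finset.sum_congr rfl fun i _ => ?_
  rw [Finset.sum_eq_single i]
  · simp
  · intro j _ hj; simp [Matrix.diagonal_apply_ne' _ hj]
  · simp

lemma rank_diagonal_eq_card' {k : ℕ} (w : Fin k → ℝ) (s : Finset (Fin k))
    (h : ∀ i, w i ≠ 0 ↔ i ∈ s) : (Matrix.diagonal w).rank = s.card := by
  classical
  rw [Matrix.rank_diagonal]
  exact Fintype.card_of_subtype s (fun i => (h i).symm)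

lemma Xex_eq (ε : ℝ) (hε : 0 ≤ ε) :
    Xex ε = Matrix.diagonal ![1, 0, 0, ε, ε, ε, ε] := by
  have hss : Real.sqrt ε * Real.sqrt ε = ε := Real.mul_self_sqrt hε
  rw [Xex, Mex1, Mex2, Mex3, ← Matrix.diagonal_smul, ← Matrix.diagonal_smul,
    Matrix.diagonal_add, Matrix.diagonal_add]
  refine congrArg Matrix.diagonal ?_
  funext i
  fin_cases i
  · show (1 : ℝ) + Real.sqrt ε * 0 + Real.sqrt ε * 0 = 1; ring
  · show -Real.sqrt ε + Real.sqrt ε * 1 + Real.sqrt ε * 0 = 0; ring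
  · show -Real.sqrt ε + Real.sqrt ε * 0 + Real.sqrt ε * 1 = 0; ring
  · show (0 : ℝ) + Real.sqrt ε * Real.sqrt ε + Real.sqrt ε * 0 = ε; linarith [hss]
  · show (0 : ℝ) + Real.sqrt ε * Real.sqrt ε + Real.sqrt ε * 0 = ε; linarith [hss]
  · show (0 : ℝ) + Real.sqrt ε * 0 + Real.sqrt ε * Real.sqrt ε = ε; linarith [hss]
  · show (0 : ℝ) + Real.sqrt ε * 0 + Real.sqrt ε * Real.sqrt ε = ε; linarith [hss]

theorem normalized_nuclearNorm_counterexample :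
    (∀ ε : ℝ, 0 < ε →
      Xex ε = Matrix.diagonal ![1, 0, 0, ε, ε, ε, ε] ∧
      (Xex ε).rank = 5 ∧
      (Mex1 ε).rank = 3 ∧ (Mex2 ε).rank = 3 ∧ (Mex3 ε).rank = 3 ∧
      nuclearNorm (Xex ε) / frobNorm (Xex ε)
        = (1 + 4 * ε) / Real.sqrt (1 + 4 * ε ^ 2) ∧
      nuclearNorm (Mex1 ε) / frobNorm (Mex1 ε)
        = (1 + 2 * Real.sqrt ε) / Real.sqrt (1 + 2 * ε) ∧
      nuclearNorm (Mex2 ε) / frobNorm (Mex2 ε)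
        = (1 + 2 * Real.sqrt ε) / Real.sqrt (1 + 2 * ε) ∧
      nuclearNorm (Mex3 ε) / frobNorm (Mex3 ε)
        = (1 + 2 * Real.sqrt ε) / Real.sqrt (1 + 2 * ε)) ∧
    ∃ ε₀ : ℝ, 0 < ε₀ ∧ ∀ ε : ℝ, 0 < ε → ε < ε₀ →
      nuclearNorm (Xex ε) / frobNorm (Xex ε) <
        nuclearNorm (Mex1 ε) / frobNorm (Mex1 ε) := by
  have main : ∀ ε : ℝ, 0 < ε →
      Xex ε = Matrix.diagonal ![1, 0, 0, ε, ε, ε, ε] ∧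
      (Xex ε).rank = 5 ∧
      (Mex1 ε).rank = 3 ∧ (Mex2 ε).rank = 3 ∧ (Mex3 ε).rank = 3 ∧
      nuclearNorm (Xex ε) / frobNorm (Xex ε)
        = (1 + 4 * ε) / Real.sqrt (1 + 4 * ε ^ 2) ∧
      nuclearNorm (Mex1 ε) / frobNorm (Mex1 ε)
        = (1 + 2 * Real.sqrt ε) / Real.sqrt (1 + 2 * ε) ∧
      nuclearNorm (Mex2 ε) / frobNorm (Mex2 ε)
        = (1 + 2 * Real.sqrt ε) / Real.sqrt (1 + 2 * ε) ∧
      nuclearNorm (Mex3 ε) / frobNorm (Mex3 ε)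
        = (1 + 2 * Real.sqrt ε) / Real.sqrt (1 + 2 * ε) := by
    intro ε hε
    have hs0 : 0 ≤ Real.sqrt ε := Real.sqrt_nonneg ε
    have hss : Real.sqrt ε * Real.sqrt ε = ε := Real.mul_self_sqrt hε.le
    have hsq : Real.sqrt ε ^ 2 = ε := Real.sq_sqrt hε.le
    have hsne : Real.sqrt ε ≠ 0 := (Real.sqrt_pos.mpr hε).ne'
    have hXd := Xex_eq ε hε.le
    have eX5 : ![1, 0, 0, ε, ε, ε, ε] (5 : Fin 7) = ε := rfl
    have eX6 : ![1, 0, 0, ε, ε, ε, ε] (6 : Fin 7) = ε := rfl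
    have e15 : ![1, -Real.sqrt ε, -Real.sqrt ε, 0, 0, 0, 0] (5 : Fin 7) = 0 := rfl
    have e16 : ![1, -Real.sqrt ε, -Real.sqrt ε, 0, 0, 0, 0] (6 : Fin 7) = 0 := rfl
    have e25 : ![0, 1, 0, Real.sqrt ε, Real.sqrt ε, 0, 0] (5 : Fin 7) = 0 := rfl
    have e26 : ![0, 1, 0, Real.sqrt ε, Real.sqrt ε, 0, 0] (6 : Fin 7) = 0 := rfl
    have e35 : ![0, 0, 1, 0, 0, Real.sqrt ε, Real.sqrt ε] (5 : Fin 7) = Real.sqrt ε := rfl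
    have e36 : ![0, 0, 1, 0, 0, Real.sqrt ε, Real.sqrt ε] (6 : Fin 7) = Real.sqrt ε := rfl
    refine ⟨hXd, ?_, ?_, ?_, ?_, ?_, ?_, ?_, ?_⟩
    · rw [hXd, rank_diagonal_eq_card' _ ({0,3,4,5,6} : Finset (Fin 7))]
      · decide
      · intro i
        fin_cases i <;> simp [hε.ne'] <;> exact fun h => hε.ne' h
    · rw [Mex1, rank_diagonal_eq_card' _ ({0,1,2} : Finset (Fin 7))]
      · decide
      · intro i
        fin_cases i <;> simp [hsne] <;> rfl
    · rw [Mex2, rank_diagonal_eq_card' _ ({1,3,4} : Finset (Fin 7))]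
      · decide
      · intro i
        fin_cases i <;> simp [hsne] <;> rfl
    · rw [Mex3, rank_diagonal_eq_card' _ ({2,5,6} : Finset (Fin 7))]
      · decide
      · intro i
        fin_cases i <;> simp [hsne] <;> exact fun h => hsne h
    · have hnum : nuclearNorm (Xex ε) = 1 + 4 * ε := by
        rw [hXd, nuclearNorm_diagonal', Fin.sum_univ_seven, eX5, eX6]
        simp [abs_of_pos hε]
        ring
      have hden : frobNorm (Xex ε) = Real.sqrt (1 + 4 * ε ^ 2) := by
        rw [hXd, frobNorm_diagonal', Fin.sum_univ_seven, eX5, eX6]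
        congr 1
        norm_num [Matrix.cons_val_two, Matrix.cons_val_three, Matrix.cons_val_four]
        ring
      rw [hnum, hden]
    · have hnum : nuclearNorm (Mex1 ε) = 1 + 2 * Real.sqrt ε := by
        rw [Mex1, nuclearNorm_diagonal', Fin.sum_univ_seven, e15, e16]
        simp [abs_of_nonneg hs0]
        ring
      have hden : frobNorm (Mex1 ε) = Real.sqrt (1 + 2 * ε) := by
        rw [Mex1, frobNorm_diagonal', Fin.sum_univ_seven, e15, e16]
        congr 1
        norm_num [Matrix.cons_val_two, Matrix.cons_val_three, Matrix.cons_val_four]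
        linear_combination 2 * hsq
      rw [hnum, hden]
    · have hnum : nuclearNorm (Mex2 ε) = 1 + 2 * Real.sqrt ε := by
        rw [Mex2, nuclearNorm_diagonal', Fin.sum_univ_seven, e25, e26]
        simp [abs_of_nonneg hs0]
        ring
      have hden : frobNorm (Mex2 ε) = Real.sqrt (1 + 2 * ε) := by
        rw [Mex2, frobNorm_diagonal', Fin.sum_univ_seven, e25, e26]
        congr 1
        norm_num [Matrix.cons_val_two, Matrix.cons_val_three, Matrix.cons_val_four]
        linear_combination 2 * hsq
      rw [hnum, hden]
    · have hnum : nuclearNorm (Mex3 ε) = 1 + 2 * Real.sqrt ε := by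
        rw [Mex3, nuclearNorm_diagonal', Fin.sum_univ_seven, e35, e36]
        simp [abs_of_nonneg hs0]
        ring
      have hden : frobNorm (Mex3 ε) = Real.sqrt (1 + 2 * ε) := by
        rw [Mex3, frobNorm_diagonal', Fin.sum_univ_seven, e35, e36]
        congr 1
        norm_num [Matrix.cons_val_two, Matrix.cons_val_three, Matrix.cons_val_four]
        linear_combination 2 * hsq
      rw [hnum, hden]
  refine ⟨main, 1/9, by norm_num, ?_⟩
  intro ε hε hε9
  obtain ⟨_, _, _, _, _, hX, hM1, _, _⟩ := main ε hε
  rw [hX, hM1]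
  have hs0 : 0 < Real.sqrt ε := Real.sqrt_pos.mpr hε
  have hs2 : Real.sqrt ε * Real.sqrt ε = ε := Real.mul_self_sqrt hε.le
  have hs3 : Real.sqrt ε < 1/3 := by nlinarith [hs2, hε9, hs0]
  have h1 : (1 + 4 * ε) / Real.sqrt (1 + 4 * ε ^ 2) ≤ 1 + 4 * ε := by
    apply div_le_self (by linarith)
    have := Real.sqrt_le_sqrt (show (1:ℝ) ≤ 1 + 4 * ε ^ 2 by nlinarith)
    rwa [Real.sqrt_one] at this
  have h2 : 1 + 4 * ε < (1 + 2 * Real.sqrt ε) / (1 + ε) := by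
    rw [lt_div_iff₀ (by linarith)]
    nlinarith [hs2, hs0, hs3, mul_pos hs0 hs0, mul_pos (mul_pos hs0 hs0) hs0,
      sq_nonneg (Real.sqrt ε), sq_nonneg (Real.sqrt ε * Real.sqrt ε)]
  have hub : Real.sqrt (1 + 2 * ε) ≤ 1 + ε := by
    have := Real.sqrt_le_sqrt (show 1 + 2 * ε ≤ (1 + ε) ^ 2 by nlinarith)
    rwa [Real.sqrt_sq (by linarith)] at this
  have hpos : 0 < Real.sqrt (1 + 2 * ε) := Real.sqrt_pos.mpr (by linarith)
  have h3 : (1 + 2 * Real.sqrt ε) / (1 + ε) ≤ (1 + 2 * Real.sqrt ε) / Real.sqrt (1 + 2 * ε) := by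
    gcongr
  calc (1 + 4 * ε) / Real.sqrt (1 + 4 * ε ^ 2) ≤ 1 + 4 * ε := h1
    _ < (1 + 2 * Real.sqrt ε) / (1 + ε) := h2
    _ ≤ (1 + 2 * Real.sqrt ε) / Real.sqrt (1 + 2 * ε) := h3
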